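/- In the ultrametric space (WM(A), d), the relation u ∼_n v iff u and v cannot be separated by any Ext-algebra of size at most n is an equivalence relation of finite index, each class being an open ball of radius 2^{-n}; consequently WM(A) is totally bounded and its completion is compact. -/

import Mathlib

inductive VPKind : Type
  | call | ret | intern
deriving DecidableEq

class VPAlphabet (A : Type) where
  kind : A → VPKind

variable {A : Type} [VPAlphabet A]

inductive WellMatched : List A → Prop
  | nil : WellMatched []
  | intern (c : A) (hc : VPAlphabet.kind c = VPKind.intern) : WellMatched [c]
  | ext (a b : A) (w : List A) (ha : VPAlphabet.kind a = VPKind.call)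
      (hb : VPAlphabet.kind b = VPKind.ret) (hw : WellMatched w) :
      WellMatched (a :: w ++ [b])
  | append (u v : List A) (hu : WellMatched u) (hv : WellMatched v) : WellMatched (u ++ v)

theorem wm_insert {u v x : List A} (h : WellMatched (u ++ v)) (hx : WellMatched x) :
    WellMatched (u ++ x ++ v) := by
  suffices H : ∀ w, WellMatched w → ∀ u' v' : List A, w = u' ++ v' →
      WellMatched (u' ++ x ++ v') from H _ h u v rfl
  intro w hw
  induction hw with
  | nil =>
    intro u' v' huv
    obtain ⟨rfl, rfl⟩ := List.append_eq_nil_iff.mp huv.symm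
    simpa using hx
  | intern c hc =>
    intro u' v' huv
    rcases u' with _ | ⟨a, u''⟩
    · simp only [List.nil_append] at huv
      subst huv
      simpa using WellMatched.append x [c] hx (WellMatched.intern c hc)
    · have h1 : c = a := by injection huv
      have h2 : ([] : List A) = u'' ++ v' := by injection huv
      obtain ⟨rfl, rfl⟩ := List.append_eq_nil_iff.mp h2.symm
      subst h1
      simpa using WellMatched.append [c] x (WellMatched.intern c hc) hx
  | ext a b w' ha hb hw' ih =>
    intro u' v' huv
    rcases u' with _ | ⟨a'', u''⟩
    · simp only [List.nil_append] at huv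
      subst huv
      simpa using WellMatched.append x _ hx (WellMatched.ext a b w' ha hb hw')
    · have h1 : a = a'' := by injection huv
      have huv2 : w' ++ [b] = u'' ++ v' := by injection huv
      subst h1
      rcases List.eq_nil_or_concat v' with rfl | ⟨v'', b'', rfl⟩
      · have h3 : u'' = w' ++ [b] := by simpa using huv2.symm
        subst h3
        simpa using WellMatched.append _ x (WellMatched.ext a b w' ha hb hw') hx
      · have h4 : w' = u'' ++ v'' ∧ [b] = [b''] :=
          List.append_inj' (by simpa [List.append_assoc] using huv2) rfl
        obtain ⟨rfl, hb'⟩ := h4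
        have hbb : b = b'' := by injection hb'
        subst hbb
        have := WellMatched.ext a b _ ha hb (ih u'' v'' rfl)
        simpa [List.append_assoc] using this
  | append w₁ w₂ h₁ h₂ ih₁ ih₂ =>
    intro u' v' huv
    rcases List.append_eq_append_iff.mp huv with ⟨a', rfl, rfl⟩ | ⟨c', rfl, rfl⟩
    · have := WellMatched.append _ _ h₁ (ih₂ a' v' rfl)
      simpa [List.append_assoc] using this
    · have := WellMatched.append _ _ (ih₁ u' c' rfl) h₂
      simpa [List.append_assoc] using this

def WM (A : Type) [VPAlphabet A] : Type := {w : List A // WellMatched w}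

instance : Monoid (WM A) where
  one := ⟨[], WellMatched.nil⟩
  mul u v := ⟨u.1 ++ v.1, WellMatched.append _ _ u.2 v.2⟩
  mul_assoc a b c := Subtype.ext (List.append_assoc _ _ _)
  one_mul a := Subtype.ext (List.nil_append _)
  mul_one a := Subtype.ext (List.append_nil _)

@[simp] theorem WM.mul_val (x y : WM A) : (x * y).1 = x.1 ++ y.1 := rfl
@[simp] theorem WM.one_val : (1 : WM A).1 = [] := rfl

instance : Nonempty (WM A) := ⟨1⟩

def extWord (u v : List A) (h : WellMatched (u ++ v)) (x : WM A) : WM A :=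
  ⟨u ++ x.1 ++ v, wm_insert h x.2⟩

@[simp] theorem extWord_val (u v : List A) (h : WellMatched (u ++ v)) (x : WM A) :
    (extWord u v h x).1 = u ++ x.1 ++ v := rfl

structure ExtAlgebra (R : Type*) [Monoid R] where
  O : Submonoid (Function.End R)
  mulLeft_mem : ∀ r : R, (fun x => r * x) ∈ O
  mulRight_mem : ∀ r : R, (fun x => x * r) ∈ O

structure ExtAlgHom {R S : Type*} [Monoid R] [Monoid S]
    (ER : ExtAlgebra R) (ES : ExtAlgebra S) where
  toMonoidHom : R →* S
  opMap : ER.O →* ES.O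
  compat : ∀ (e : ER.O) (r : R),
    (opMap e : Function.End S) (toMonoidHom r) = toMonoidHom ((e : Function.End R) r)

/-- A morphism of `Ext`-algebras from the free `Ext`-algebra of well-matched words
into an `Ext`-algebra `R`, given by its monoid part and by the images of the
operations `ext_{u,v}`. -/
structure ExtHomWM (A : Type) [VPAlphabet A] {R : Type*} [Monoid R] (ER : ExtAlgebra R) where
  toMonoidHom : WM A →* R
  op : ∀ u v : List A, WellMatched (u ++ v) → ER.O
  op_one : op [] [] WellMatched.nil = 1
  op_comp : ∀ u v (h : WellMatched (u ++ v)) u' v' (h' : WellMatched (u' ++ v'))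
      (h'' : WellMatched ((u ++ u') ++ (v' ++ v))),
      op (u ++ u') (v' ++ v) h'' = op u v h * op u' v' h'
  op_spec : ∀ u v (h : WellMatched (u ++ v)) (x : WM A),
      (op u v h : Function.End R) (toMonoidHom x) = toMonoidHom (extWord u v h x)

/-- `R` recognises `L` via the morphism `φ` when `L` is the preimage of its image. -/
def Recognises {R : Type*} [Monoid R] {ER : ExtAlgebra R}
    (φ : ExtHomWM A ER) (L : Set (WM A)) : Prop :=
  L = φ.toMonoidHom ⁻¹' (φ.toMonoidHom '' L)

/-- The free `Ext`-algebra structure on the monoid of well-matched words. -/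
def freeExt (A : Type) [VPAlphabet A] : ExtAlgebra (WM A) where
  O :=
    { carrier := {e | ∃ u v, ∃ h : WellMatched (u ++ v), ∀ x : WM A, e x = extWord u v h x}
      one_mem' := ⟨[], [], WellMatched.nil, fun x => Subtype.ext (by show x.1 = [] ++ x.1 ++ []; simp)⟩
      mul_mem' := by
        rintro e f ⟨u, v, h, he⟩ ⟨u', v', h', hf⟩
        have h'' : WellMatched ((u ++ u') ++ (v' ++ v)) := by
          simpa [List.append_assoc] using wm_insert h h'
        exact ⟨u ++ u', v' ++ v, h'', fun x => by
          rw [show (e * f) x = e (f x) from rfl, hf, he]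
          exact Subtype.ext (by simp [List.append_assoc])⟩ }
  mulLeft_mem r := ⟨r.1, [], by simpa using r.2, fun x => Subtype.ext (by simp)⟩
  mulRight_mem r := ⟨[], r.1, by simpa using r.2, fun x => Subtype.ext (by simp)⟩

/-- A sub-`Ext`-algebra of an `Ext`-algebra. -/
structure SubExt {S : Type*} [Monoid S] (ES : ExtAlgebra S) where
  carrier : Submonoid S
  ops : Submonoid (Function.End S)
  ops_le : ops ≤ ES.O
  maps_to : ∀ e ∈ ops, ∀ x ∈ carrier, e x ∈ carrier
  mulLeft_mem : ∀ r ∈ carrier, (fun x => r * x) ∈ ops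
  mulRight_mem : ∀ r ∈ carrier, (fun x => x * r) ∈ ops

/-- The `Ext`-algebra structure induced on a sub-`Ext`-algebra. -/
def SubExt.toExtAlgebra {S : Type*} [Monoid S] {ES : ExtAlgebra S} (T : SubExt ES) :
    ExtAlgebra T.carrier where
  O :=
    { carrier := {e : Function.End T.carrier | ∃ f ∈ T.ops, ∀ x : T.carrier, (e x : S) = f x}
      one_mem' := ⟨1, T.ops.one_mem, fun _ => rfl⟩
      mul_mem' := by
        rintro e e' ⟨f, hf, he⟩ ⟨f', hf', he'⟩
        exact ⟨f * f', mul_mem hf hf', fun x => by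
          rw [show (e * e') x = e (e' x) from rfl, show (f * f') (x : S) = f (f' x) from rfl,
            ← he', he]⟩ }
  mulLeft_mem r := ⟨fun x => (r : S) * x, T.mulLeft_mem r r.2, fun _ => rfl⟩
  mulRight_mem r := ⟨fun x => x * (r : S), T.mulRight_mem r r.2, fun _ => rfl⟩

/-- `ER` is a quotient of `ES` if there is a surjective morphism of `Ext`-algebras
from `ES` onto `ER`. -/
def IsQuotientOf {R S : Type*} [Monoid R] [Monoid S]
    (ER : ExtAlgebra R) (ES : ExtAlgebra S) : Prop :=
  ∃ h : ExtAlgHom ES ER, Function.Surjective h.toMonoidHom ∧ Function.Surjective h.opMap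

/-- Bundled finite `Ext`-algebras. -/
structure BExt : Type 1 where
  carrier : Type
  [mon : Monoid carrier]
  [fin : Finite carrier]
  ext : ExtAlgebra carrier

attribute [instance] BExt.mon BExt.fin

section ListTake

variable {B : Type*}

theorem take_take_append (N k : ℕ) (hk : k ≤ N) (x v : List B) :
    ((x.take N) ++ v).take k = (x ++ v).take k := by
  rw [List.take_append, List.take_append, List.take_take,
    List.length_take]
  rw [min_eq_left hk]
  congr 2
  omega

theorem take_mid (N : ℕ) (u s v : List B) :
    (u ++ s.take N ++ v).take N = (u ++ s ++ v).take N := by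
  conv_lhs => rw [List.append_assoc, List.take_append]
  conv_rhs => rw [List.append_assoc, List.take_append]
  congr 1
  exact take_take_append N _ (Nat.sub_le _ _) s v

theorem take_append_right (N : ℕ) (u s : List B) :
    (u ++ s.take N).take N = (u ++ s).take N := by
  have := take_mid N u s ([] : List B)
  simpa using this

end ListTake

/-- The monoid of words of length at most `N`, with truncated concatenation. -/
def TruncM (B : Type) (N : ℕ) : Type := {l : List B // l.length ≤ N}

instance {B : Type} {N : ℕ} : Monoid (TruncM B N) where
  one := ⟨[], by simp⟩
  mul u v := ⟨(u.1 ++ v.1).take N, by rw [List.length_take]; exact min_le_left _ _⟩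
  mul_assoc a b c := Subtype.ext (by
    show ((a.1 ++ b.1).take N ++ c.1).take N = (a.1 ++ (b.1 ++ c.1).take N).take N
    rw [take_take_append N N le_rfl, take_append_right, List.append_assoc])
  one_mul a := Subtype.ext (by
    show (([] : List B) ++ a.1).take N = a.1
    rw [List.nil_append]
    exact List.take_of_length_le a.2)
  mul_one a := Subtype.ext (by
    show (a.1 ++ ([] : List B)).take N = a.1
    rw [List.append_nil]
    exact List.take_of_length_le a.2)

@[simp] theorem TruncM.one_val {B : Type} {N : ℕ} : (1 : TruncM B N).1 = [] := rfl
@[simp] theorem TruncM.mul_val {B : Type} {N : ℕ} (u v : TruncM B N) :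
    (u * v).1 = (u.1 ++ v.1).take N := rfl

instance {B : Type} [Finite B] {N : ℕ} : Finite (TruncM B N) := by
  haveI : Finite (Option B) := Finite.of_equiv (B ⊕ (PUnit : Type)) (Equiv.optionEquivSumPUnit B).symm
  refine Finite.of_injective
    (fun l : TruncM B N => fun i : Fin (N + 1) => l.1[(i : ℕ)]?) ?_
  intro a b hab
  apply Subtype.ext
  apply List.ext_getElem?
  intro i
  by_cases hi : i < N + 1
  · exact congrFun hab ⟨i, hi⟩
  · have ha := a.2
    have hb := b.2
    rw [List.getElem?_eq_none (by omega), List.getElem?_eq_none (by omega)]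

/-- Truncation is a monoid morphism on well-matched words. -/
def truncMonoidHom (A : Type) [VPAlphabet A] (N : ℕ) : WM A →* TruncM A N where
  toFun w := ⟨w.1.take N, by rw [List.length_take]; exact min_le_left _ _⟩
  map_one' := Subtype.ext (by simp)
  map_mul' u v := Subtype.ext (by
    show (u.1 ++ v.1).take N = (u.1.take N ++ v.1.take N).take N
    rw [take_take_append N N le_rfl, take_append_right])

/-- The truncation monoid as an `Ext`-algebra with all functions as operations. -/
def truncExt (A : Type) [VPAlphabet A] (N : ℕ) : ExtAlgebra (TruncM A N) where
  O := ⊤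
  mulLeft_mem _ := trivial
  mulRight_mem _ := trivial

def truncOp {A : Type} [VPAlphabet A] {N : ℕ} (u v : List A) : Function.End (TruncM A N) :=
  fun m => ⟨(u ++ m.1 ++ v).take N, by rw [List.length_take]; exact min_le_left _ _⟩

/-- The truncation morphism of `Ext`-algebras. -/
def truncExtHom (A : Type) [VPAlphabet A] (N : ℕ) : ExtHomWM A (truncExt A N) where
  toMonoidHom := truncMonoidHom A N
  op u v _ := ⟨truncOp u v, trivial⟩
  op_one := by
    apply Subtype.ext
    funext m
    apply Subtype.ext
    show (([] : List A) ++ m.1 ++ []).take N = m.1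
    simpa using List.take_of_length_le m.2
  op_comp u v h u' v' h' h'' := by
    apply Subtype.ext
    funext m
    apply Subtype.ext
    show ((u ++ u') ++ m.1 ++ (v' ++ v)).take N = (u ++ ((u' ++ m.1 ++ v').take N) ++ v).take N
    rw [take_mid]
    simp [List.append_assoc]
  op_spec u v h x := by
    apply Subtype.ext
    show (u ++ (x.1.take N) ++ v).take N = (u ++ x.1 ++ v).take N
    exact take_mid N u x.1 v

/-- `x` and `y` can be separated by a finite `Ext`-algebra of cardinality at most `n`. -/
def SepBound (n : ℕ) (x y : WM A) : Prop :=
  ∃ (R : BExt) (φ : ExtHomWM A R.ext),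
    Nat.card R.carrier ≤ n ∧ φ.toMonoidHom x ≠ φ.toMonoidHom y

/-- The minimal cardinality of a finite `Ext`-algebra separating `x` and `y`. -/
noncomputable def sepDeg (x y : WM A) : ℕ := sInf {n | SepBound n x y}

/-- The profinite (ultra)metric on well-matched words. -/
noncomputable def pdist (x y : WM A) : ℝ :=
  open scoped Classical in if x = y then 0 else (2 : ℝ)⁻¹ ^ sepDeg x y

theorem pdist_nonneg (x y : WM A) : 0 ≤ pdist x y := by
  unfold pdist
  split
  · exact le_rfl
  · positivity

theorem sepBound_comm {n : ℕ} {x y : WM A} : SepBound n x y ↔ SepBound n y x := by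
  constructor <;> rintro ⟨R, φ, h1, h2⟩ <;> exact ⟨R, φ, h1, h2.symm⟩

theorem pdist_comm (x y : WM A) : pdist x y = pdist y x := by
  have h1 : sepDeg x y = sepDeg y x := by
    unfold sepDeg
    congr 1
    ext n
    exact sepBound_comm
  rcases eq_or_ne x y with rfl | h
  · rfl
  · unfold pdist
    rw [if_neg h, if_neg (Ne.symm h), h1]

theorem exists_sepBound [Finite A] {x y : WM A} (hxy : x ≠ y) : ∃ n, SepBound n x y := by
  classical
  set N := max x.1.length y.1.length with hN
  refine ⟨Nat.card (TruncM A N),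
    { carrier := TruncM A N, ext := truncExt A N }, truncExtHom A N, le_rfl, ?_⟩
  intro hcontra
  have hv : x.1.take N = y.1.take N := congrArg Subtype.val hcontra
  rw [List.take_of_length_le (le_max_left _ _ : x.1.length ≤ N),
    List.take_of_length_le (le_max_right _ _ : y.1.length ≤ N)] at hv
  exact hxy (Subtype.ext hv)

theorem pdist_ultra [Finite A] (x y z : WM A) :
    pdist x z ≤ max (pdist x y) (pdist y z) := by
  rcases eq_or_ne x z with rfl | hxz
  · calc pdist x x = 0 := by simp [pdist]
      _ ≤ _ := le_max_of_le_left (pdist_nonneg _ _)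
  rcases eq_or_ne x y with rfl | hxy
  · exact le_max_of_le_right le_rfl
  rcases eq_or_ne y z with rfl | hyz
  · exact le_max_of_le_left le_rfl
  have hSne : {n | SepBound n x z}.Nonempty := exists_sepBound hxz
  obtain ⟨R, φ, hcard, hne⟩ := Nat.sInf_mem hSne
  by_cases hxy' : φ.toMonoidHom x = φ.toMonoidHom y
  · have hb : SepBound (sepDeg x z) y z := ⟨R, φ, hcard, by rw [← hxy']; exact hne⟩
    have hle : sepDeg y z ≤ sepDeg x z := Nat.sInf_le hb
    calc pdist x z = (2 : ℝ)⁻¹ ^ sepDeg x z := by rw [pdist, if_neg hxz]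
      _ ≤ (2 : ℝ)⁻¹ ^ sepDeg y z := pow_le_pow_of_le_one (by norm_num) (by norm_num) hle
      _ = pdist y z := by rw [pdist, if_neg hyz]
      _ ≤ _ := le_max_right _ _
  · have hb : SepBound (sepDeg x z) x y := ⟨R, φ, hcard, hxy'⟩
    have hle : sepDeg x y ≤ sepDeg x z := Nat.sInf_le hb
    calc pdist x z = (2 : ℝ)⁻¹ ^ sepDeg x z := by rw [pdist, if_neg hxz]
      _ ≤ (2 : ℝ)⁻¹ ^ sepDeg x y := pow_le_pow_of_le_one (by norm_num) (by norm_num) hle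
      _ = pdist x y := by rw [pdist, if_neg hxy]
      _ ≤ _ := le_max_left _ _

noncomputable instance WM.metricSpace [Finite A] : MetricSpace (WM A) where
  dist := pdist
  dist_self x := by simp [pdist]
  dist_comm := pdist_comm
  dist_triangle x y z := by
    refine (pdist_ultra x y z).trans (max_le ?_ ?_)
    · exact le_add_of_nonneg_right (pdist_nonneg _ _)
    · exact le_add_of_nonneg_left (pdist_nonneg _ _)
  eq_of_dist_eq_zero := by
    intro x y h
    by_contra hxy
    have h' : pdist x y = 0 := h
    rw [pdist, if_neg hxy] at h'
    exact absurd h' (ne_of_gt (pow_pos (by norm_num) _))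


theorem nonSep_equivalence {A : Type} [VPAlphabet A] (n : ℕ) :
    Equivalence (fun x y : WM A => ¬ SepBound n x y) := by
  constructor
  · rintro x ⟨R, φ, _, hne⟩
    exact hne rfl
  · intro x y h hs
    exact h (sepBound_comm.mp hs)
  · intro x y z hxy hyz ⟨R, φ, hcard, hne⟩
    by_cases hm : φ.toMonoidHom x = φ.toMonoidHom y
    · exact hyz ⟨R, φ, hcard, by rw [← hm]; exact hne⟩
    · exact hxy ⟨R, φ, hcard, hm⟩

/-! ### Auxiliary development for statement14 -/

section Aux14

theorem sepBound_mono {k n : ℕ} (hkn : k ≤ n) {x y : WM A} (h : SepBound k x y) :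
    SepBound n x y := by
  obtain ⟨R, φ, h1, h2⟩ := h; exact ⟨R, φ, h1.trans hkn, h2⟩

theorem extPair {a b : A} (ha : VPAlphabet.kind a = VPKind.call)
    (hb : VPAlphabet.kind b = VPKind.ret) : WellMatched ([a] ++ [b]) :=
  WellMatched.ext a b [] ha hb WellMatched.nil

/-- A morphism `ExtHomWM` is determined on the monoid level by its values on internal
letters and by the operations attached to call/return pairs. -/
theorem extHom_det {R : Type*} [Monoid R] {E1 E2 : ExtAlgebra R}
    (φ : ExtHomWM A E1) (ψ : ExtHomWM A E2)
    (hi : ∀ c (hc : VPAlphabet.kind c = VPKind.intern),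
      φ.toMonoidHom ⟨[c], WellMatched.intern c hc⟩ =
        ψ.toMonoidHom ⟨[c], WellMatched.intern c hc⟩)
    (he : ∀ a b (ha : VPAlphabet.kind a = VPKind.call) (hb : VPAlphabet.kind b = VPKind.ret),
      (φ.op [a] [b] (extPair ha hb) : Function.End R) =
        (ψ.op [a] [b] (extPair ha hb) : Function.End R))
    (x : WM A) : φ.toMonoidHom x = ψ.toMonoidHom x := by
  obtain ⟨w, hw⟩ := x
  induction hw with
  | nil =>
    show φ.toMonoidHom 1 = ψ.toMonoidHom 1
    rw [map_one, map_one]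
  | intern c hc => exact hi c hc
  | ext a b w ha hb hw ih =>
    have hx : (⟨a :: w ++ [b], WellMatched.ext a b w ha hb hw⟩ : WM A) =
        extWord [a] [b] (extPair ha hb) ⟨w, hw⟩ := Subtype.ext rfl
    have h1 := φ.op_spec [a] [b] (extPair ha hb) ⟨w, hw⟩
    have h2 := ψ.op_spec [a] [b] (extPair ha hb) ⟨w, hw⟩
    rw [hx, ← h1, ← h2, he a b ha hb, ih]
  | append u v hu hv ihu ihv =>
    show φ.toMonoidHom (⟨u, hu⟩ * ⟨v, hv⟩) = ψ.toMonoidHom (⟨u, hu⟩ * ⟨v, hv⟩)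
    rw [map_mul (M := WM A) φ.toMonoidHom ⟨u, hu⟩ ⟨v, hv⟩, map_mul (M := WM A) ψ.toMonoidHom ⟨u, hu⟩ ⟨v, hv⟩, ihu, ihv]

/-- The `Ext`-algebra on a monoid with all functions as operations. -/
def topExt (S : Type) [Monoid S] : ExtAlgebra S :=
  ⟨⊤, fun _ => trivial, fun _ => trivial⟩

/-- Transfer an `ExtHomWM` along a multiplicative equivalence, landing into the
full `Ext`-algebra on the target. -/
def ExtHomWM.transfer {R S : Type} [Monoid R] [Monoid S] {ER : ExtAlgebra R}
    (φ : ExtHomWM A ER) (g : R ≃* S) : ExtHomWM A (topExt S) where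
  toMonoidHom := g.toMonoidHom.comp φ.toMonoidHom
  op u v h := ⟨fun s => g ((φ.op u v h : Function.End R) (g.symm s)), trivial⟩
  op_one := by
    apply Subtype.ext
    funext s
    show g (((φ.op [] [] WellMatched.nil : ExtAlgebra.O _) : Function.End R) (g.symm s)) = s
    rw [φ.op_one]
    show g (g.symm s) = s
    simp
  op_comp u v h u' v' h' h'' := by
    apply Subtype.ext
    funext s
    show g ((φ.op (u ++ u') (v' ++ v) h'' : Function.End R) (g.symm s)) =
      g ((φ.op u v h : Function.End R) (g.symm (g ((φ.op u' v' h' : Function.End R) (g.symm s)))))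
    rw [φ.op_comp u v h u' v' h', g.symm_apply_apply]
    rfl
  op_spec u v h x := by
    show g ((φ.op u v h : Function.End R) (g.symm (g (φ.toMonoidHom x)))) = _
    rw [g.symm_apply_apply, φ.op_spec]
    rfl

instance finiteMonoid (M : Type*) [Finite M] : Finite (Monoid M) :=
  Finite.of_injective
    (fun μ : Monoid M => @HMul.hMul M M M (@instHMul M (Monoid.toMulOneClass (self := μ)).toMul))
    fun _ _ h => Monoid.ext h

instance finiteOption (α : Type*) [Finite α] : Finite (Option α) :=
  Finite.of_equiv (α ⊕ (PUnit : Type)) (Equiv.optionEquivSumPUnit α).symm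

/-- A carrier type with no pre-existing algebraic instances. -/
def FinC (m : ℕ) : Type := Fin m

instance (m : ℕ) : Finite (FinC m) := by unfold FinC; infer_instance

theorem FinC.card (m : ℕ) : Nat.card (FinC m) = m :=
  Nat.card_eq_of_equiv_fin (Equiv.refl (Fin m))

/-- Parameter data for morphisms into `Ext`-algebras of size at most `n`:
a cardinality `m ≤ n`, a monoid structure on `FinC m`, values for the internal
letters, and operations for the call/return pairs. -/
def HD (A : Type) [VPAlphabet A] (n : ℕ) : Type :=
  Σ m : Fin (n + 1), Monoid (FinC m.1) × (A → FinC m.1) × (A → A → (FinC m.1 → FinC m.1))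

instance (n : ℕ) [Finite A] : Finite (HD A n) := by
  unfold HD; infer_instance

/-- The datum `d` is realized by some morphism of well-matched words. -/
def Realized (n : ℕ) (d : HD A n) : Prop :=
  letI : Monoid (FinC d.1.1) := d.2.1
  ∃ ψ : ExtHomWM A (topExt (FinC d.1.1)),
    (∀ c (hc : VPAlphabet.kind c = VPKind.intern),
      ψ.toMonoidHom ⟨[c], WellMatched.intern c hc⟩ = d.2.2.1 c) ∧
    (∀ a b (ha : VPAlphabet.kind a = VPKind.call) (hb : VPAlphabet.kind b = VPKind.ret),
      (ψ.op [a] [b] (extPair ha hb) : Function.End (FinC d.1.1)) = d.2.2.2 a b)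

/-- The signature of a well-matched word: its value under a chosen morphism for
each realizable datum. -/
noncomputable def sig (n : ℕ) (x : WM A) (d : HD A n) : Option (FinC d.1.1) :=
  letI : Monoid (FinC d.1.1) := d.2.1
  open scoped Classical in
  if h : Realized n d then
    some ((Exists.choose h).toMonoidHom x) else none

theorem sig_eq_of_not_sepBound {n : ℕ} {x y : WM A} (h : ¬ SepBound n x y) :
    sig n x = sig n y := by
  funext d
  unfold sig
  letI : Monoid (FinC d.1.1) := d.2.1
  split
  · next hr =>
    congr 1
    by_contra hne
    apply h
    refine ⟨@BExt.mk (FinC d.1.1) _ inferInstance (topExt _), hr.choose, ?_, hne⟩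
    rw [FinC.card]
    exact Nat.lt_succ_iff.mp d.1.2
  · rfl

theorem not_sepBound_of_sig_eq {n : ℕ} {x y : WM A} (h : sig n x = sig n y) :
    ¬ SepBound n x y := by
  rintro ⟨R, φ, hcard, hne⟩
  -- transport `R` onto `FinC m`
  set m := Nat.card R.carrier with hm
  have e : FinC m ≃ R.carrier := (Finite.equivFin R.carrier).symm
  letI μ : Monoid (FinC m) := e.monoid
  have g : R.carrier ≃* FinC m :=
    { toEquiv := e.symm
      map_mul' := fun a b => by
        show e.symm (a * b) = e.symm (e (e.symm a) * e (e.symm b))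
        rw [e.apply_symm_apply, e.apply_symm_apply] }
  set ψ : ExtHomWM A (topExt (FinC m)) := φ.transfer g with hψ
  classical
  set d : HD A n := ⟨⟨m, Nat.lt_succ_of_le hcard⟩, μ,
    fun c => if hc : VPAlphabet.kind c = VPKind.intern then
      ψ.toMonoidHom ⟨[c], WellMatched.intern c hc⟩ else g 1,
    fun a b => if hab : VPAlphabet.kind a = VPKind.call ∧ VPAlphabet.kind b = VPKind.ret then
      (ψ.op [a] [b] (extPair hab.1 hab.2) : Function.End (FinC m)) else id⟩ with hd
  have hr : Realized n d := by
    refine ⟨ψ, fun c hc => ?_, fun a b ha hb => ?_⟩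
    · exact Eq.symm (dif_pos hc : d.2.2.1 c = _)
    · exact Eq.symm (dif_pos (⟨ha, hb⟩ : _ ∧ _) : d.2.2.2 a b = _)
  have hsig := congrFun h d
  unfold sig at hsig
  rw [dif_pos hr, dif_pos hr, Option.some_inj] at hsig
  obtain ⟨hri, hre⟩ := hr.choose_spec
  have hdet : ∀ z : WM A, hr.choose.toMonoidHom z = ψ.toMonoidHom z := by
    intro z
    refine extHom_det hr.choose ψ (fun c hc => ?_) (fun a b ha hb => ?_) z
    · rw [hri c hc]; exact dif_pos hc
    · rw [hre a b ha hb]; exact dif_pos (⟨ha, hb⟩ : _ ∧ _)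
  have hxy : ψ.toMonoidHom x = ψ.toMonoidHom y := by
    rw [← hdet x, ← hdet y, hsig]
  exact hne (g.injective hxy)

end Aux14

open UniformSpace in
/-- Inseparability by `Ext`-algebras of size at most `n` is an equivalence relation of
finite index whose classes are the open balls of radius `2^{-n}`; hence `WM(A)` is
totally bounded and its completion is compact. -/
theorem statement14 {A : Type} [VPAlphabet A] [Finite A] (n : ℕ) :
    Equivalence (fun x y : WM A => ¬ SepBound n x y) ∧
    Finite (Quotient (Setoid.mk _ (nonSep_equivalence (A := A) n))) ∧
    (∀ u : WM A, {v : WM A | ¬ SepBound n u v} = Metric.ball u ((2 : ℝ)⁻¹ ^ n)) ∧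
    TotallyBounded (Set.univ : Set (WM A)) ∧
    CompactSpace (Completion (WM A)) := by
  have hfin : ∀ k : ℕ, Finite (Quotient (Setoid.mk _ (nonSep_equivalence (A := A) k))) := by
    intro k
    have hinj : Function.Injective
        (Quotient.lift (sig k) (fun _ _ hab => sig_eq_of_not_sepBound hab) :
          Quotient (Setoid.mk _ (nonSep_equivalence (A := A) k)) →
            ∀ d : HD A k, Option (FinC d.1.1)) := by
      intro q1 q2 hq
      induction q1 using Quotient.ind
      induction q2 using Quotient.ind
      exact Quotient.sound (not_sepBound_of_sig_eq hq)
    exact Finite.of_injective _ hinj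
  have hball : ∀ (k : ℕ) (u : WM A),
      {v : WM A | ¬ SepBound k u v} = Metric.ball u ((2 : ℝ)⁻¹ ^ k) := by
    intro k u
    ext v
    simp only [Set.mem_setOf_eq, Metric.mem_ball]
    rcases eq_or_ne u v with rfl | huv
    · simp only [dist_self]
      constructor
      · intro _; positivity
      · intro _; exact (nonSep_equivalence k).refl u
    · have hd : dist v u = (2 : ℝ)⁻¹ ^ sepDeg u v := by
        show pdist v u = _
        rw [pdist_comm, pdist, if_neg huv]
      rw [hd, pow_lt_pow_iff_right_of_lt_one₀ (by norm_num) (by norm_num)]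
      constructor
      · intro hns
        have hgt : ∀ j ∈ {j | SepBound j u v}, k < j := by
          intro j hj
          by_contra hjk
          exact hns (sepBound_mono (le_of_not_gt hjk) hj)
        exact hgt _ (Nat.sInf_mem (exists_sepBound huv))
      · intro hlt hs
        exact absurd (Nat.sInf_le hs) (not_le.mpr hlt)
  have htb : TotallyBounded (Set.univ : Set (WM A)) := by
    rw [Metric.totallyBounded_iff]
    intro ε hε
    obtain ⟨k, hk⟩ := exists_pow_lt_of_lt_one hε (by norm_num : (2 : ℝ)⁻¹ < 1)
    haveI := hfin k
    letI s : Setoid (WM A) := Setoid.mk _ (nonSep_equivalence (A := A) k)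
    refine ⟨Set.range (fun q : Quotient s => q.out),
      Set.finite_range _, fun x _ => ?_⟩
    simp only [Set.mem_iUnion]
    refine ⟨(⟦x⟧ : Quotient s).out, ⟨⟨_, rfl⟩, ?_⟩⟩
    have hx : ¬ SepBound k ((⟦x⟧ : Quotient s).out) x := Quotient.mk_out x
    have hx' : x ∈ Metric.ball ((⟦x⟧ : Quotient s).out) ((2 : ℝ)⁻¹ ^ k) := by
      rw [← hball k]
      exact hx
    exact Metric.ball_subset_ball (le_of_lt hk) hx'
  refine ⟨nonSep_equivalence n, hfin n, hball n, htb, ?_⟩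
  have h1 : TotallyBounded (Set.range ((↑) : WM A → Completion (WM A))) := by
    rw [← Set.image_univ]
    exact htb.image (Completion.uniformContinuous_coe _)
  have h2 : TotallyBounded (Set.univ : Set (Completion (WM A))) := by
    rw [← Dense.closure_eq Completion.denseRange_coe]
    exact h1.closure
  exact ⟨isCompact_iff_totallyBounded_isComplete.mpr
    ⟨h2, completeSpace_iff_isComplete_univ.mp inferInstance⟩⟩
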